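/- arXiv:1310.3574 — 4 statements merged into one kernel-verified Lean document; each statement's English description precedes it below -/
import Mathlib

section
/- A balanced (t-1)-spread of PG(n-1,2) exists if and only if t divides n. -/
/-- The vector space `GF(2)^n`. -/
abbrev V (n : ℕ) := Fin n → ZMod 2

/-- A `(t-1)`-flat of `PG(n-1,2)`: the set of nonzero points of a
`t`-dimensional `GF(2)`-subspace of `GF(2)^n`. -/
def IsFlat (n t : ℕ) (f : Set (V n)) : Prop :=
  ∃ S : Submodule (ZMod 2) (V n),
    Module.finrank (ZMod 2) S = t ∧ f = (S : Set (V n)) \ {0}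

/-- A balanced `(t-1)`-spread of `PG(n-1,2)`: a collection of `(t-1)`-flats
whose underlying point sets partition the nonzero vectors of `GF(2)^n`. -/
def IsSpread (n t : ℕ) (ψ : Set (Set (V n))) : Prop :=
  (∀ f ∈ ψ, IsFlat n t f) ∧ ψ.PairwiseDisjoint id ∧
    ⋃₀ ψ = {v : V n | v ≠ 0}

open Module

/-- If `2^t - 1` divides `2^n - 1` then `t` divides `n`. -/
lemma spread_aux_dvd {t : ℕ} (ht : 1 ≤ t) : ∀ n, (2^t - 1) ∣ (2^n - 1) → t ∣ n := by
  intro n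
  induction n using Nat.strong_induction_on with
  | _ n ih =>
    intro h
    rcases lt_or_ge n t with hn | hn
    · rcases Nat.eq_zero_or_pos n with rfl | hn0
      · exact dvd_zero t
      · exfalso
        have h2 : (2:ℕ)^n < 2^t := Nat.pow_lt_pow_right one_lt_two hn
        have h3 : 2 ≤ (2:ℕ)^n := by
          calc (2:ℕ) = 2^1 := (pow_one 2).symm
          _ ≤ 2^n := Nat.pow_le_pow_right (by norm_num) hn0
        have := Nat.le_of_dvd (by omega) h
        omega
    · have h1 : (2:ℕ)^(n-t) * (2^t - 1) = 2^n - 2^(n-t) := by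
        rw [Nat.mul_sub, mul_one, ← pow_add]
        congr 2
        omega
      have h2 : (2^t - 1) ∣ (2^n - 2^(n-t)) := h1 ▸ Dvd.intro_left _ rfl
      have hb : (2:ℕ)^(n-t) ≤ 2^n := Nat.pow_le_pow_right (by norm_num) (by omega)
      have h1' : 1 ≤ (2:ℕ)^(n-t) := Nat.one_le_two_pow
      have h3 : (2^n - 1) - (2^n - 2^(n-t)) = 2^(n-t) - 1 := by omega
      have key : (2^t - 1) ∣ (2^(n-t) - 1) := h3 ▸ Nat.dvd_sub h h2
      have := ih (n - t) (by omega) key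
      have : t ∣ (n - t) + t := this.add (dvd_refl t)
      rwa [Nat.sub_add_cancel hn] at this

/-- A `(t-1)`-flat has exactly `2^t - 1` points. -/
lemma spread_flat_card {n t : ℕ} {f : Set (V n)} (hf : IsFlat n t f) :
    (Set.toFinite f).toFinset.card = 2^t - 1 := by
  obtain ⟨S, hS, rfl⟩ := hf
  rw [← Set.ncard_eq_toFinset_card]
  have h0 : (0 : V n) ∈ (S : Set (V n)) := S.zero_mem
  rw [Set.ncard_diff_singleton_of_mem h0]
  have : Fintype ↥S := Fintype.ofFinite _
  have hc : (S : Set (V n)).ncard = Fintype.card ↥S := by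
    rw [← Nat.card_coe_set_eq, Nat.card_eq_fintype_card]
    rfl
  rw [hc, card_eq_pow_finrank (K := ZMod 2), ZMod.card, hS]

/-- Counting direction: a spread forces `2^t - 1 ∣ 2^n - 1`. -/
lemma spread_forward {n t : ℕ} (ψ : Set (Set (V n))) (h : IsSpread n t ψ) :
    (2^t - 1) ∣ (2^n - 1) := by
  classical
  obtain ⟨hflat, hdis, hun⟩ := h
  have hψ : ψ.Finite := Set.toFinite ψ
  set ψF := hψ.toFinset with hψF
  set B : Set (V n) → Finset (V n) := fun f => (Set.toFinite f).toFinset with hB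
  have hdisj : ∀ f ∈ ψF, ∀ g ∈ ψF, f ≠ g → Disjoint (B f) (B g) := by
    intro f hf g hg hne
    rw [hB]
    exact Set.Finite.disjoint_toFinset.mpr
      (hdis (hψ.mem_toFinset.mp hf) (hψ.mem_toFinset.mp hg) hne)
  have hcardU : (ψF.biUnion B).card = ψF.card * (2^t - 1) := by
    rw [Finset.card_biUnion hdisj]
    rw [Finset.sum_congr rfl (fun f hf => spread_flat_card (hflat f (hψ.mem_toFinset.mp hf)))]
    rw [Finset.sum_const, smul_eq_mul]
  have hU : ψF.biUnion B = (Set.toFinite {v : V n | v ≠ 0}).toFinset := by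
    ext x
    simp only [Finset.mem_biUnion, Set.Finite.mem_toFinset, hB]
    constructor
    · rintro ⟨f, hf, hx⟩
      have : x ∈ ⋃₀ ψ := ⟨f, hψ.mem_toFinset.mp hf, hx⟩
      rw [hun] at this; exact this
    · intro hx
      have : x ∈ ⋃₀ ψ := hun ▸ hx
      obtain ⟨f, hf, hx⟩ := this
      exact ⟨f, hψ.mem_toFinset.mpr hf, hx⟩
  have hnz : (Set.toFinite {v : V n | v ≠ 0}).toFinset.card = 2^n - 1 := by
    rw [← Set.ncard_eq_toFinset_card]
    have : {v : V n | v ≠ 0} = Set.univ \ {0} := by ext v; simp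
    rw [this, Set.ncard_diff_singleton_of_mem (Set.mem_univ _), Set.ncard_univ,
      Nat.card_eq_fintype_card]
    congr 1
    simp [Fintype.card_fun]
  rw [hU, hnz] at hcardU
  exact Dvd.intro_left _ hcardU.symm

/-- Two spans of nonzero vectors sharing a nonzero point coincide. -/
lemma spread_span_eq_of_mem {K W : Type*} [Field K] [AddCommGroup W] [Module K W]
    {w v : W} (hv : v ≠ 0) (h : v ∈ Submodule.span K {w}) :
    Submodule.span K {w} = Submodule.span K {v} := by
  obtain ⟨a, rfl⟩ := Submodule.mem_span_singleton.mp h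
  have ha : a ≠ 0 := by rintro rfl; simp at hv
  apply le_antisymm
  · rw [Submodule.span_singleton_le_iff_mem, Submodule.mem_span_singleton]
    exact ⟨a⁻¹, by rw [smul_smul, inv_mul_cancel₀ ha, one_smul]⟩
  · rw [Submodule.span_singleton_le_iff_mem]
    exact Submodule.smul_mem _ a (Submodule.mem_span_singleton_self w)

/-- Construction direction: if `t ∣ n`, a balanced spread exists. -/
lemma spread_backward {n t : ℕ} (ht : 1 ≤ t) (hd : t ∣ n) :
    ∃ ψ : Set (Set (V n)), IsSpread n t ψ := by
  classical
  obtain ⟨m, rfl⟩ := hd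
  set K := GaloisField 2 t with hK
  have ht0 : t ≠ 0 := by omega
  have hfrK : finrank (ZMod 2) K = t := GaloisField.finrank 2 ht0
  set W := Fin m → K with hW
  have hfrW : finrank (ZMod 2) W = t * m := by
    have hm : finrank K W = m := by
      show finrank K (Fin m → K) = m
      rw [Module.finrank_pi]; simp
    rw [← Module.finrank_mul_finrank (ZMod 2) K W, hfrK, hm]
  have hfrV : finrank (ZMod 2) (V (t * m)) = t * m := by
    simp [Module.finrank_pi]
  obtain ⟨e⟩ : Nonempty (V (t * m) ≃ₗ[ZMod 2] W) :=
    FiniteDimensional.nonempty_linearEquiv_of_finrank_eq (hfrV.trans hfrW.symm)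
  set P : W → Set (V (t * m)) :=
    fun w => e ⁻¹' ((Submodule.span K {w} : Set W) \ {0}) with hP
  refine ⟨P '' {w : W | w ≠ 0}, ?_, ?_, ?_⟩
  · rintro f ⟨w, hw, rfl⟩
    refine ⟨((Submodule.span K {w}).restrictScalars (ZMod 2)).comap
      (e : V (t * m) →ₗ[ZMod 2] W), ?_, ?_⟩
    · have e1 : (((Submodule.span K {w}).restrictScalars (ZMod 2)).comap
          (e : V (t * m) →ₗ[ZMod 2] W)) ≃ₗ[ZMod 2]
          ((Submodule.span K {w}).restrictScalars (ZMod 2)) :=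
        LinearEquiv.ofSubmodule' e _
      rw [e1.finrank_eq]
      have : finrank (ZMod 2) ((Submodule.span K {w}).restrictScalars (ZMod 2)) =
          finrank (ZMod 2) (Submodule.span K {w}) := rfl
      rw [this, ← Module.finrank_mul_finrank (ZMod 2) K (Submodule.span K {w}),
        finrank_span_singleton hw, hfrK, mul_one]
    · rw [hP]
      ext v
      simp only [Set.mem_preimage, Set.mem_diff, Set.mem_singleton_iff, SetLike.mem_coe,
        Submodule.mem_comap, Submodule.restrictScalars_mem, LinearEquiv.coe_coe]
      constructor
      · rintro ⟨h1, h2⟩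
        exact ⟨h1, fun hv => h2 (by rw [hv]; exact e.map_zero)⟩
      · rintro ⟨h1, h2⟩
        exact ⟨h1, fun hv => h2 (by simpa using e.injective (by simpa using hv))⟩
  · rintro f ⟨w, hw, rfl⟩ g ⟨w', hw', rfl⟩ hne
    rw [Function.onFun, Set.disjoint_left]
    intro v hvf hvg
    apply hne
    simp only [hP, Set.mem_preimage, Set.mem_diff, Set.mem_singleton_iff] at hvf hvg
    have hev : e v ≠ 0 := hvf.2
    have h1 : Submodule.span K {w} = Submodule.span K {e v} :=
      spread_span_eq_of_mem hev hvf.1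
    have h2 : Submodule.span K {w'} = Submodule.span K {e v} :=
      spread_span_eq_of_mem hev hvg.1
    simp only [id, hP, h1, h2]
  · ext v
    simp only [Set.mem_sUnion, Set.mem_setOf_eq, Set.mem_image]
    constructor
    · rintro ⟨f, ⟨w, hw, rfl⟩, hv⟩
      simp only [hP, Set.mem_preimage, Set.mem_diff, Set.mem_singleton_iff] at hv
      intro h0
      exact hv.2 (by rw [h0]; exact e.map_zero)
    · intro hv
      have hev : e v ≠ 0 := fun h => hv (by simpa using e.injective (by simpa using h))
      refine ⟨P (e v), ⟨e v, hev, rfl⟩, ?_⟩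
      simp only [hP, Set.mem_preimage, Set.mem_diff, Set.mem_singleton_iff]
      exact ⟨Submodule.mem_span_singleton_self _, hev⟩

/-- André's theorem for q = 2: a balanced `(t-1)`-spread of `PG(n-1,2)`
exists if and only if `t` divides `n`. -/
theorem spread_exists_iff_dvd (n t : ℕ) (ht : 1 ≤ t) (htn : t ≤ n) :
    (∃ ψ : Set (Set (V n)), IsSpread n t ψ) ↔ t ∣ n := by
  constructor
  · rintro ⟨ψ, h⟩
    exact spread_aux_dvd ht n (spread_forward ψ h)
  · exact spread_backward ht
end

section
/- The existence of a balanced covering star St(n, μ, t, t0) of PG(n-1,2) is equivalent to the existence of a balanced (h-1)-spread of PG(u-1,2), where u = n - t0 and h = t - t0. Moreover, given a spread ψ = {f_1,...,f_μ} of PG(u-1,2) embedded in PG(n-1,2) and a (t0-1)-flat π disjoint from the span of the f_i, the sets f_i* = span(f_i, π) minus zero form such a covering star with nucleus π. -/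
/-- A balanced covering star `St(n, μ, t, t0)` of `PG(n-1,2)` with set of rays
`Ω` and nucleus `π`: `μ` distinct `(t-1)`-flats, each containing the
`(t0-1)`-flat `π`, pairwise intersecting exactly in `π`, and covering all
nonzero points of `GF(2)^n`. -/
def IsCoveringStar (n μ t t0 : ℕ) (Ω : Set (Set (V n))) (π : Set (V n)) : Prop :=
  Ω.ncard = μ ∧ IsFlat n t0 π ∧
    (∀ f ∈ Ω, IsFlat n t f ∧ π ⊆ f) ∧
    (∀ f ∈ Ω, ∀ g ∈ Ω, f ≠ g → f ∩ g = π) ∧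
    ⋃₀ Ω = {v : V n | v ≠ 0}

/-- The embedding of `GF(2)^u` into `GF(2)^n` via the first `u` coordinates. -/
def emb (u n : ℕ) : V u →ₗ[ZMod 2] V n where
  toFun v := fun j => if h : (j : ℕ) < u then v ⟨j, h⟩ else 0
  map_add' x y := by funext j; by_cases h : (j : ℕ) < u <;> simp [h]
  map_smul' c x := by funext j; by_cases h : (j : ℕ) < u <;> simp [h]

open Submodule

lemma finrank_V (n : ℕ) : Module.finrank (ZMod 2) (V n) = n :=
  Module.finrank_fin_fun (ZMod 2)

lemma span_sdiff_zero {n : ℕ} (S : Submodule (ZMod 2) (V n)) :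
    span (ZMod 2) ((S : Set (V n)) \ {0}) = S := by
  refine le_antisymm (span_le.2 fun x hx => hx.1) fun x hx => ?_
  rcases eq_or_ne x 0 with rfl | hx0
  · exact Submodule.zero_mem _
  · exact subset_span ⟨hx, hx0⟩

lemma emb_injective {u n : ℕ} (h : u ≤ n) : Function.Injective (emb u n) := by
  intro x y hxy
  funext i
  have := congrFun hxy ⟨i.1, lt_of_lt_of_le i.2 h⟩
  simpa [emb] using this

lemma card_V (u : ℕ) : Nat.card (V u) = 2 ^ u := by
  simp [Nat.card_eq_fintype_card]

lemma ncard_nonzero (u : ℕ) : ({v : V u | v ≠ 0}).ncard = 2 ^ u - 1 := by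
  have h1 : ({v : V u | v ≠ 0}) = Set.univ \ {0} := by ext v; simp
  rw [h1, Set.ncard_diff_singleton_of_mem (Set.mem_univ _),
    Set.ncard_univ, card_V]

lemma flat_ncard {n t : ℕ} {S : Submodule (ZMod 2) (V n)}
    (hS : Module.finrank (ZMod 2) S = t) :
    (((S : Set (V n))) \ {0}).ncard = 2 ^ t - 1 := by
  classical
  have h1 : ((S : Set (V n))).ncard = 2 ^ t := by
    have : Fintype S := Fintype.ofFinite S
    have h2 : Nat.card S = 2 ^ t := by
      rw [Nat.card_eq_fintype_card, Module.card_eq_pow_finrank (K := ZMod 2), ZMod.card, hS]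
    rw [← Nat.card_coe_set_eq]
    exact h2
  rw [Set.ncard_diff_singleton_of_mem (Submodule.zero_mem S), h1]

lemma ncard_sUnion_finset {α : Type*} [Finite α] (s : Finset (Set α))
    (hd : (s : Set (Set α)).PairwiseDisjoint id) :
    (⋃₀ (s : Set (Set α))).ncard = ∑ f ∈ s, f.ncard := by
  classical
  induction s using Finset.induction_on with
  | empty => simp
  | @insert a s ha ih =>
    have hd' : (s : Set (Set α)).PairwiseDisjoint id :=
      hd.subset (by simp [Set.subset_insert])
    have hdis : Disjoint a (⋃₀ (s : Set (Set α))) := by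
      refine Set.disjoint_sUnion_right.2 fun f hf => ?_
      exact hd (by simp) (by simp [hf]) (fun h => ha (h ▸ hf))
    rw [Finset.coe_insert, Set.sUnion_insert,
      Set.ncard_union_eq hdis (Set.toFinite _) (Set.toFinite _),
      Finset.sum_insert ha, ih hd']

lemma spread_card {u h : ℕ} {ψ : Set (Set (V u))} (hs : IsSpread u h ψ) :
    ψ.ncard * (2 ^ h - 1) = 2 ^ u - 1 := by
  classical
  have hfin : ψ.Finite := Set.toFinite ψ
  have hcoe : (hfin.toFinset : Set (Set (V u))) = ψ := hfin.coe_toFinset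
  have h1 := ncard_sUnion_finset hfin.toFinset (by rw [hcoe]; exact hs.2.1)
  rw [hcoe, hs.2.2, ncard_nonzero] at h1
  have h2 : ∀ f ∈ hfin.toFinset, f.ncard = 2 ^ h - 1 := by
    intro f hf
    obtain ⟨S, hS, rfl⟩ := hs.1 f (hcoe ▸ hf)
    exact flat_ncard hS
  rw [Finset.sum_congr rfl h2, Finset.sum_const, smul_eq_mul] at h1
  rw [← Set.ncard_coe_finset _ , hcoe] at h1
  omega

lemma spread_ncard {u h : ℕ} (hh : 0 < h) {ψ : Set (Set (V u))} (hs : IsSpread u h ψ) :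
    ψ.ncard = (2 ^ u - 1) / (2 ^ h - 1) := by
  have hpos : 0 < 2 ^ h - 1 := by
    have : (2:ℕ) ^ 1 ≤ 2 ^ h := Nat.pow_le_pow_right (by norm_num) hh
    omega
  rw [← spread_card hs, Nat.mul_div_cancel _ hpos]

lemma construction {n t t0 : ℕ} (h0 : t0 < t) (h1 : t < n)
    {ψ : Set (Set (V (n - t0)))} (hψ : IsSpread (n - t0) (t - t0) ψ)
    {π : Set (V n)} (hπ : IsFlat n t0 π)
    (hdisj : Disjoint (Submodule.span (ZMod 2) (emb (n - t0) n '' ⋃₀ ψ))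
      (Submodule.span (ZMod 2) π)) :
    IsCoveringStar n ((2 ^ (n - t0) - 1) / (2 ^ (t - t0) - 1)) t t0
      ((fun f => (Submodule.span (ZMod 2) (emb (n - t0) n '' f ∪ π) :
          Set (V n)) \ {0}) '' ψ) π := by
  classical
  have hun : n - t0 ≤ n := Nat.sub_le _ _
  have hinjE := emb_injective hun
  obtain ⟨P, hPrank, hπP⟩ := hπ
  have hspanπ : span (ZMod 2) π = P := by rw [hπP]; exact span_sdiff_zero P
  have hE : span (ZMod 2) (emb (n - t0) n '' ⋃₀ ψ) = LinearMap.range (emb (n - t0) n) := by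
    rw [hψ.2.2]
    have h2 : {v : V (n - t0) | v ≠ 0} = (Set.univ : Set (V (n - t0))) \ {0} := by
      ext v; simp
    rw [h2, Set.image_diff hinjE, Set.image_univ, Set.image_singleton, map_zero]
    exact span_sdiff_zero (LinearMap.range (emb (n - t0) n))
  have hdisjEP : Disjoint (LinearMap.range (emb (n - t0) n)) P := by
    rwa [hE, hspanπ] at hdisj
  have hrankE : Module.finrank (ZMod 2) (LinearMap.range (emb (n - t0) n)) = n - t0 := by
    rw [LinearMap.finrank_range_of_inj hinjE, finrank_V]
  have hrankF : ∀ f ∈ ψ, Module.finrank (ZMod 2) (span (ZMod 2) f) = t - t0 := by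
    intro f hf
    obtain ⟨F, hF, rfl⟩ := hψ.1 f hf
    rw [span_sdiff_zero]; exact hF
  have hfspan : ∀ f ∈ ψ,
      f = ((span (ZMod 2) f : Submodule (ZMod 2) (V (n - t0))) : Set (V (n - t0))) \ {0} := by
    intro f hf
    obtain ⟨F, hF, rfl⟩ := hψ.1 f hf
    rw [span_sdiff_zero]
  have hS : ∀ f : Set (V (n - t0)), span (ZMod 2) (emb (n - t0) n '' f ∪ π)
      = (span (ZMod 2) f).map (emb (n - t0) n) ⊔ P := by
    intro f
    rw [Submodule.span_union, Submodule.span_image, hspanπ]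
  have hmapE : ∀ f : Set (V (n - t0)),
      (span (ZMod 2) f).map (emb (n - t0) n) ≤ LinearMap.range (emb (n - t0) n) :=
    fun f => LinearMap.map_le_range
  have hdisjFP : ∀ f : Set (V (n - t0)),
      Disjoint ((span (ZMod 2) f).map (emb (n - t0) n)) P :=
    fun f => hdisjEP.mono_left (hmapE f)
  have hrankS : ∀ f ∈ ψ, Module.finrank (ZMod 2)
      ↥((span (ZMod 2) f).map (emb (n - t0) n) ⊔ P) = t := by
    intro f hf
    have h3 := Submodule.finrank_sup_add_finrank_inf_eq
      ((span (ZMod 2) f).map (emb (n - t0) n)) P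
    rw [disjoint_iff.1 (hdisjFP f), finrank_bot] at h3
    have h4 : Module.finrank (ZMod 2)
        ↥((span (ZMod 2) f).map (emb (n - t0) n)) = t - t0 := by
      rw [← LinearEquiv.finrank_eq (Submodule.equivMapOfInjective _ hinjE _)]
      exact hrankF f hf
    omega
  have hbotFG : ∀ f ∈ ψ, ∀ g ∈ ψ, f ≠ g →
      (span (ZMod 2) f) ⊓ (span (ZMod 2) g) = ⊥ := by
    intro f hf g hg hne
    rw [eq_bot_iff]
    rintro x ⟨hxf, hxg⟩
    rcases eq_or_ne x 0 with rfl | hx0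
    · exact Submodule.zero_mem _
    · exfalso
      have hxin : x ∈ f := by rw [hfspan f hf]; exact ⟨hxf, hx0⟩
      have hxin' : x ∈ g := by rw [hfspan g hg]; exact ⟨hxg, hx0⟩
      exact (hψ.2.1 hf hg hne).le_bot ⟨hxin, hxin'⟩
  have hinter : ∀ f ∈ ψ, ∀ g ∈ ψ, f ≠ g →
      ((span (ZMod 2) f).map (emb (n - t0) n) ⊔ P)
        ⊓ ((span (ZMod 2) g).map (emb (n - t0) n) ⊔ P) = P := by
    intro f hf g hg hne
    refine le_antisymm ?_ (le_inf le_sup_right le_sup_right)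
    rintro x ⟨hxf, hxg⟩
    obtain ⟨a, ha, p, hp, rfl⟩ := Submodule.mem_sup.1 hxf
    obtain ⟨b, hb, q, hq, hbq⟩ := Submodule.mem_sup.1 hxg
    have hab : a - b ∈ LinearMap.range (emb (n - t0) n) ⊓ P := by
      constructor
      · exact Submodule.sub_mem _ (hmapE f ha) (hmapE g hb)
      · have heq : a - b = q - p := by
          rw [sub_eq_sub_iff_add_eq_add, ← hbq, add_comm]
        rw [heq]; exact Submodule.sub_mem P hq hp
    rw [disjoint_iff.1 hdisjEP, Submodule.mem_bot, sub_eq_zero] at hab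
    have ha0 : a = 0 := by
      have hmem : a ∈ ((span (ZMod 2) f).map (emb (n - t0) n))
          ⊓ ((span (ZMod 2) g).map (emb (n - t0) n)) := ⟨ha, hab ▸ hb⟩
      rw [← Submodule.map_inf _ hinjE, hbotFG f hf g hg hne, Submodule.map_bot,
        Submodule.mem_bot] at hmem
      exact hmem
    rw [ha0, zero_add]
    exact hp
  set Φ : Set (V (n - t0)) → Set (V n) := fun f =>
    (Submodule.span (ZMod 2) (emb (n - t0) n '' f ∪ π) : Set (V n)) \ {0} with hΦ
  have hΦeq : ∀ f : Set (V (n - t0)),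
      Φ f = (((span (ZMod 2) f).map (emb (n - t0) n) ⊔ P : Submodule (ZMod 2) (V n)) :
        Set (V n)) \ {0} := by
    intro f; rw [hΦ]; simp only [hS]
  have hinj : Set.InjOn Φ ψ := by
    intro f hf g hg he
    by_contra hne
    have hsets : ((span (ZMod 2) f).map (emb (n - t0) n) ⊔ P : Submodule (ZMod 2) (V n))
        = ((span (ZMod 2) g).map (emb (n - t0) n) ⊔ P : Submodule (ZMod 2) (V n)) := by
      apply SetLike.coe_injective
      rw [hΦeq f, hΦeq g] at he
      ext x
      rcases eq_or_ne x 0 with rfl | hx0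
      · simp [Submodule.zero_mem]
      · have h := Set.ext_iff.1 he x
        simpa [Set.mem_diff, hx0] using h
    have h5 : ((span (ZMod 2) f).map (emb (n - t0) n) ⊔ P : Submodule (ZMod 2) (V n))
        = ((span (ZMod 2) f).map (emb (n - t0) n) ⊔ P)
          ⊓ ((span (ZMod 2) g).map (emb (n - t0) n) ⊔ P) := by
      rw [← hsets, inf_idem]
    have h6 : ((span (ZMod 2) f).map (emb (n - t0) n) ⊔ P : Submodule (ZMod 2) (V n))
        = P := by rw [h5, hinter f hf g hg hne]
    have hrt := hrankS f hf
    rw [h6, hPrank] at hrt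
    omega
  have hψcard : ψ.ncard = (2 ^ (n - t0) - 1) / (2 ^ (t - t0) - 1) :=
    spread_ncard (by omega) hψ
  refine ⟨?_, ⟨P, hPrank, hπP⟩, ?_, ?_, ?_⟩
  · rw [Set.ncard_image_of_injOn hinj, hψcard]
  · rintro A ⟨f, hf, rfl⟩
    constructor
    · refine ⟨span (ZMod 2) (emb (n - t0) n '' f ∪ π), ?_, rfl⟩
      rw [hS f]; exact hrankS f hf
    · intro x hx
      rw [hπP] at hx
      refine ⟨?_, hx.2⟩
      rw [SetLike.mem_coe, hS f]
      exact Submodule.mem_sup_right hx.1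
  · rintro A ⟨f, hf, rfl⟩ B ⟨g, hg, rfl⟩ hne
    have hfg : f ≠ g := fun h => hne (by rw [h])
    show Φ f ∩ Φ g = π
    rw [hΦeq f, hΦeq g, hπP]
    ext x
    simp only [Set.mem_inter_iff, Set.mem_diff, Set.mem_singleton_iff, SetLike.mem_coe]
    constructor
    · rintro ⟨⟨hxf, hx0⟩, ⟨hxg, _⟩⟩
      have hx : x ∈ ((span (ZMod 2) f).map (emb (n - t0) n) ⊔ P)
          ⊓ ((span (ZMod 2) g).map (emb (n - t0) n) ⊔ P) := ⟨hxf, hxg⟩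
      rw [hinter f hf g hg hfg] at hx
      exact ⟨hx, hx0⟩
    · rintro ⟨hxP, hx0⟩
      exact ⟨⟨Submodule.mem_sup_right hxP, hx0⟩, ⟨Submodule.mem_sup_right hxP, hx0⟩⟩
  · have htop : LinearMap.range (emb (n - t0) n) ⊔ P = ⊤ := by
      apply Submodule.eq_top_of_finrank_eq
      have h3 := Submodule.finrank_sup_add_finrank_inf_eq
        (LinearMap.range (emb (n - t0) n)) P
      rw [disjoint_iff.1 hdisjEP, finrank_bot] at h3
      rw [finrank_V]
      omega
    ext x
    simp only [Set.mem_sUnion, Set.mem_setOf_eq]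
    constructor
    · rintro ⟨A, ⟨f, hf, rfl⟩, hx⟩
      rw [hΦeq f] at hx
      exact hx.2
    · intro hx0
      have hxtop : x ∈ LinearMap.range (emb (n - t0) n) ⊔ P := by rw [htop]; trivial
      obtain ⟨e, he, p, hp, rfl⟩ := Submodule.mem_sup.1 hxtop
      obtain ⟨w, rfl⟩ := he
      have hne : ∃ f ∈ ψ, emb (n - t0) n w + p ∈
          ((span (ZMod 2) f).map (emb (n - t0) n) ⊔ P : Submodule (ZMod 2) (V n)) := by
        rcases eq_or_ne w 0 with rfl | hw0
        · have hu1 : 0 < n - t0 := by omega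
          have hv : (fun _ => 1 : V (n - t0)) ≠ 0 := by
            intro h
            have := congrFun h ⟨0, hu1⟩
            simp at this
          have hvv : (fun _ => 1 : V (n - t0)) ∈ ⋃₀ ψ := by rw [hψ.2.2]; exact hv
          obtain ⟨f, hf, -⟩ := hvv
          exact ⟨f, hf, Submodule.mem_sup_right (by simpa using hp)⟩
        · have hw : w ∈ ⋃₀ ψ := by rw [hψ.2.2]; exact hw0
          obtain ⟨f, hf, hwf⟩ := hw
          refine ⟨f, hf, Submodule.add_mem_sup ?_ hp⟩
          exact Submodule.mem_map_of_mem (subset_span hwf)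
      obtain ⟨f, hf, hmem⟩ := hne
      exact ⟨Φ f, ⟨f, hf, rfl⟩, by rw [hΦeq f]; exact ⟨hmem, hx0⟩⟩

set_option maxHeartbeats 1000000 in
set_option synthInstance.maxHeartbeats 400000 in
lemma star_to_spread {n t t0 μ : ℕ} (h0 : t0 < t) (h1 : t < n)
    {Ω : Set (Set (V n))} {π : Set (V n)} (hst : IsCoveringStar n μ t t0 Ω π) :
    ∃ ψ : Set (Set (V (n - t0))), IsSpread (n - t0) (t - t0) ψ := by
  classical
  obtain ⟨hcard, ⟨P, hPrank, hπP⟩, hflats, hint, hcover⟩ := hst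
  have hq : Module.finrank (ZMod 2) (V n ⧸ P) = n - t0 := by
    have h2 := Submodule.finrank_quotient_add_finrank P
    rw [finrank_V, hPrank] at h2; omega
  let e : (V n ⧸ P) ≃ₗ[ZMod 2] V (n - t0) :=
    LinearEquiv.ofFinrankEq _ _ (by rw [hq, finrank_V])
  set L : V n →ₗ[ZMod 2] V (n - t0) := e.toLinearMap ∘ₗ P.mkQ with hL
  have hLker : LinearMap.ker L = P := by
    rw [hL, LinearMap.ker_comp, LinearEquiv.ker, Submodule.comap_bot, Submodule.ker_mkQ]
  have hLsurj : Function.Surjective L := e.surjective.comp (Submodule.mkQ_surjective P)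
  have hrep : ∀ f ∈ Ω, Module.finrank (ZMod 2) (span (ZMod 2) f) = t ∧
      f = ((span (ZMod 2) f : Submodule (ZMod 2) (V n)) : Set (V n)) \ {0} := by
    intro f hf
    obtain ⟨S, hS, rfl⟩ := (hflats f hf).1
    rw [span_sdiff_zero]; exact ⟨hS, rfl⟩
  have hPle : ∀ f ∈ Ω, P ≤ span (ZMod 2) f := by
    intro f hf x hx
    rcases eq_or_ne x 0 with rfl | hx0
    · exact zero_mem _
    · have hxπ : x ∈ π := by rw [hπP]; exact ⟨hx, hx0⟩
      exact subset_span ((hflats f hf).2 hxπ)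
  have hSinf : ∀ f ∈ Ω, ∀ g ∈ Ω, f ≠ g → span (ZMod 2) f ⊓ span (ZMod 2) g = P := by
    intro f hf g hg hne
    refine le_antisymm ?_ (le_inf (hPle f hf) (hPle g hg))
    rintro x ⟨hxf, hxg⟩
    rcases eq_or_ne x 0 with rfl | hx0
    · exact zero_mem _
    · have hx : x ∈ f ∩ g := by
        constructor
        · rw [(hrep f hf).2]; exact ⟨hxf, hx0⟩
        · rw [(hrep g hg).2]; exact ⟨hxg, hx0⟩
      rw [hint f hf g hg hne, hπP] at hx
      exact hx.1
  have hmapbot : ∀ f ∈ Ω, ∀ g ∈ Ω, f ≠ g →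
      (span (ZMod 2) f).map L ⊓ (span (ZMod 2) g).map L = ⊥ := by
    intro f hf g hg hne
    rw [eq_bot_iff]
    rintro y ⟨hyf, hyg⟩
    obtain ⟨a, ha, rfl⟩ := hyf
    obtain ⟨b, hb, hba⟩ := hyg
    have hab : a - b ∈ P := by
      rw [← hLker, LinearMap.mem_ker, map_sub, hba, sub_self]
    have hamem : a ∈ span (ZMod 2) f ⊓ span (ZMod 2) g := by
      refine ⟨ha, ?_⟩
      have h7 : a = b + (a - b) := by abel
      rw [h7]; exact add_mem hb (hPle g hg hab)
    rw [hSinf f hf g hg hne] at hamem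
    have : L a = 0 := by
      rw [← LinearMap.mem_ker, hLker]; exact hamem
    rw [Submodule.mem_bot]
    exact this
  have hrankmap : ∀ f ∈ Ω,
      Module.finrank (ZMod 2) ((span (ZMod 2) f).map L) = t - t0 := by
    intro f hf
    have hrn := LinearMap.finrank_range_add_finrank_ker (L.domRestrict (span (ZMod 2) f))
    have hdr : L.domRestrict (span (ZMod 2) f) = L ∘ₗ (span (ZMod 2) f).subtype := rfl
    have hrange : LinearMap.range (L.domRestrict (span (ZMod 2) f))
        = (span (ZMod 2) f).map L := by
      rw [hdr, LinearMap.range_comp, Submodule.range_subtype]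
    have hker : Module.finrank (ZMod 2)
        (LinearMap.ker (L.domRestrict (span (ZMod 2) f))) = t0 := by
      rw [LinearMap.ker_domRestrict, hLker,
        LinearEquiv.finrank_eq (Submodule.comapSubtypeEquivOfLe (hPle f hf))]
      exact hPrank
    rw [hrange, hker, (hrep f hf).1] at hrn
    omega
  refine ⟨(fun f => (((span (ZMod 2) f).map L : Submodule (ZMod 2) (V (n - t0))) :
      Set (V (n - t0))) \ {0}) '' Ω, ?_, ?_, ?_⟩
  · rintro A ⟨f, hf, rfl⟩
    exact ⟨(span (ZMod 2) f).map L, hrankmap f hf, rfl⟩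
  · rintro A ⟨f, hf, rfl⟩ B ⟨g, hg, rfl⟩ hne
    have hfg : f ≠ g := fun h => hne (by rw [h])
    simp only [Function.onFun, id_eq]
    rw [Set.disjoint_left]
    rintro x ⟨hxf, hx0⟩ ⟨hxg, -⟩
    have : x ∈ ((span (ZMod 2) f).map L) ⊓ ((span (ZMod 2) g).map L) := ⟨hxf, hxg⟩
    rw [hmapbot f hf g hg hfg, Submodule.mem_bot] at this
    exact hx0 this
  · ext w
    simp only [Set.mem_sUnion, Set.mem_setOf_eq]
    constructor
    · rintro ⟨A, ⟨f, hf, rfl⟩, hw⟩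
      exact hw.2
    · intro hw0
      obtain ⟨v, rfl⟩ := hLsurj w
      have hv0 : v ≠ 0 := by rintro rfl; rw [map_zero] at hw0; exact hw0 rfl
      have hv : v ∈ ⋃₀ Ω := by rw [hcover]; exact hv0
      obtain ⟨f, hf, hvf⟩ := hv
      exact ⟨_, ⟨f, hf, rfl⟩, Submodule.mem_map_of_mem (subset_span hvf), hw0⟩


/-- Lemma 1 (spread–star correspondence): a balanced covering star
`St(n, μ, t, t0)` of `PG(n-1,2)` exists iff a balanced `(h-1)`-spread of
`PG(u-1,2)` exists, where `u = n - t0`, `h = t - t0`.  Moreover, given such a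
spread `ψ` embedded in `PG(n-1,2)` and a `(t0-1)`-flat `π` disjoint from the
span of its flats, the sets `span(f ∪ π) \ {0}` for `f ∈ ψ` form a covering
star with nucleus `π`. -/
theorem star_spread_correspondence (n t t0 μ : ℕ) (h0 : t0 < t) (h1 : t < n)
    (hμ : μ = (2 ^ (n - t0) - 1) / (2 ^ (t - t0) - 1)) :
    ((∃ (Ω : Set (Set (V n))) (π : Set (V n)), IsCoveringStar n μ t t0 Ω π) ↔
      ∃ ψ : Set (Set (V (n - t0))), IsSpread (n - t0) (t - t0) ψ) ∧
    (∀ (ψ : Set (Set (V (n - t0)))), IsSpread (n - t0) (t - t0) ψ →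
      ∀ π : Set (V n), IsFlat n t0 π →
        Disjoint (Submodule.span (ZMod 2) (emb (n - t0) n '' ⋃₀ ψ))
          (Submodule.span (ZMod 2) π) →
        IsCoveringStar n μ t t0
          ((fun f => (Submodule.span (ZMod 2) (emb (n - t0) n '' f ∪ π) :
              Set (V n)) \ {0}) '' ψ) π) := by
  constructor
  · constructor
    · rintro ⟨Ω, π, hst⟩
      exact star_to_spread h0 h1 hst
    · rintro ⟨ψ, hψ⟩
      have hun : n - t0 ≤ n := Nat.sub_le _ _
      have hinjE := emb_injective hun
      obtain ⟨Q, hQ⟩ := Submodule.exists_isCompl (LinearMap.range (emb (n - t0) n))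
      have hrankE : Module.finrank (ZMod 2)
          (LinearMap.range (emb (n - t0) n)) = n - t0 := by
        rw [LinearMap.finrank_range_of_inj hinjE, finrank_V]
      have hQrank : Module.finrank (ZMod 2) Q = t0 := by
        have h2 := Submodule.finrank_add_eq_of_isCompl hQ
        rw [finrank_V, hrankE] at h2
        omega
      have hπ : IsFlat n t0 ((Q : Set (V n)) \ {0}) := ⟨Q, hQrank, rfl⟩
      have hE : span (ZMod 2) (emb (n - t0) n '' ⋃₀ ψ)
          = LinearMap.range (emb (n - t0) n) := by
        rw [hψ.2.2]
        have h2 : {v : V (n - t0) | v ≠ 0} = (Set.univ : Set (V (n - t0))) \ {0} := by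
          ext v; simp
        rw [h2, Set.image_diff hinjE, Set.image_univ, Set.image_singleton, map_zero]
        exact span_sdiff_zero (LinearMap.range (emb (n - t0) n))
      have hdisj : Disjoint (span (ZMod 2) (emb (n - t0) n '' ⋃₀ ψ))
          (span (ZMod 2) ((Q : Set (V n)) \ {0})) := by
        rw [hE, span_sdiff_zero]
        exact hQ.disjoint
      exact ⟨_, _, by rw [hμ]; exact construction h0 h1 hψ hπ hdisj⟩
  · intro ψ hψ π hπ hd
    rw [hμ]
    exact construction h0 h1 hψ hπ hd
end

section
/- Let ψ1 and ψ2 be balanced (h-1)-spreads of PG(u-1,2), let π be the (t0-1)-flat spanned by the last t0 standard basis vectors of GF(2)^{u+t0}, and let Ω_j = ψ_j × π be the corresponding covering stars St(u+t0, μ, h+t0, t0) (each ray of Ω_j is the span of a flat of ψ_j, embedded in the first u coordinates, together with π). Then Ω1 and Ω2 are isomorphic (equal after applying some element of GL(u+t0, 2)) if and only if ψ1 and ψ2 are isomorphic (equal after applying some element of GL(u,2)). -/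
/-- The `(t0-1)`-flat `π` spanned by the last `t0` standard basis vectors of
`GF(2)^(u+t0)`: the nonzero vectors supported on the last `t0` coordinates. -/
def nucleus (u t0 : ℕ) : Set (V (u + t0)) :=
  {v | v ≠ 0 ∧ ∀ j : Fin (u + t0), (j : ℕ) < u → v j = 0}

/-- The covering star `Ω = ψ × π` associated to a spread `ψ` of `PG(u-1,2)`:
its rays are `span(f ∪ π) \ {0}` for the flats `f` of `ψ` embedded in the
first `u` coordinates of `GF(2)^(u+t0)`. -/
def starOf (u t0 : ℕ) (ψ : Set (Set (V u))) : Set (Set (V (u + t0))) :=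
  (fun f => (Submodule.span (ZMod 2)
      (emb u (u + t0) '' f ∪ nucleus u t0) : Set (V (u + t0))) \ {0}) '' ψ

namespace StarIso

/-- The subspace of vectors supported on the last `t0` coordinates. -/
def NN (u t0 : ℕ) : Submodule (ZMod 2) (V (u + t0)) where
  carrier := {v | ∀ j : Fin (u + t0), (j : ℕ) < u → v j = 0}
  add_mem' := fun {a b} ha hb j hj => by
    show a j + b j = 0
    rw [ha j hj, hb j hj, add_zero]
  zero_mem' := fun j _ => rfl
  smul_mem' := fun c v hv j hj => by
    show c * v j = 0
    rw [hv j hj, mul_zero]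

lemma mem_NN {u t0 : ℕ} {v : V (u + t0)} :
    v ∈ NN u t0 ↔ ∀ j : Fin (u + t0), (j : ℕ) < u → v j = 0 := Iff.rfl

/-- Projection to the first `u` coordinates. -/
def prj (u t0 : ℕ) : V (u + t0) →ₗ[ZMod 2] V u where
  toFun v := fun i => v (Fin.castAdd t0 i)
  map_add' x y := rfl
  map_smul' c x := rfl

lemma prj_emb (u t0 : ℕ) (v : V u) : prj u t0 (emb u (u + t0) v) = v := by
  funext i
  show (emb u (u + t0) v) (Fin.castAdd t0 i) = v i
  simp only [emb, LinearMap.coe_mk, AddHom.coe_mk]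
  rw [dif_pos (by simpa using i.isLt)]
  exact congrArg v (Fin.ext (by simp))

lemma emb_inj (u t0 : ℕ) : Function.Injective (emb u (u + t0)) := by
  intro a b hab
  rw [← prj_emb u t0 a, hab, prj_emb]

lemma sub_emb_prj_mem (u t0 : ℕ) (v : V (u + t0)) :
    v - emb u (u + t0) (prj u t0 v) ∈ NN u t0 := by
  intro j hj
  show v j - (emb u (u + t0) (prj u t0 v)) j = 0
  have : (emb u (u + t0) (prj u t0 v)) j = v j := by
    simp only [emb, LinearMap.coe_mk, AddHom.coe_mk]
    rw [dif_pos hj]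
    exact congrArg v (Fin.ext (by simp))
  rw [this, sub_self]

lemma prj_of_mem {u t0 : ℕ} {v : V (u + t0)} (hv : v ∈ NN u t0) :
    prj u t0 v = 0 := by
  funext i
  exact hv (Fin.castAdd t0 i) (by simpa using i.isLt)

lemma emb_mem_NN {u t0 : ℕ} {x : V u} (hx : emb u (u + t0) x ∈ NN u t0) :
    x = 0 := by
  rw [← prj_emb u t0 x, prj_of_mem hx]

lemma nucleus_eq (u t0 : ℕ) :
    nucleus u t0 = (NN u t0 : Set (V (u + t0))) \ {0} := by
  ext v
  simp only [nucleus, Set.mem_setOf_eq, Set.mem_diff, SetLike.mem_coe, mem_NN,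
    Set.mem_singleton_iff]
  tauto

lemma span_sdiff_zero {M : Type*} [AddCommGroup M] [Module (ZMod 2) M]
    (s : Set M) :
    Submodule.span (ZMod 2) (s \ {0}) = Submodule.span (ZMod 2) s := by
  refine le_antisymm (Submodule.span_mono Set.diff_subset) ?_
  rw [Submodule.span_le]
  intro x hx
  by_cases hx0 : x = 0
  · simp [hx0]
  · exact Submodule.subset_span ⟨hx, hx0⟩

lemma span_nucleus (u t0 : ℕ) :
    Submodule.span (ZMod 2) (nucleus u t0) = NN u t0 := by
  rw [nucleus_eq, span_sdiff_zero, Submodule.span_eq]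

lemma raySpan {u t0 : ℕ} (S : Submodule (ZMod 2) (V u)) {f : Set (V u)}
    (hf : f = (S : Set (V u)) \ {0}) :
    Submodule.span (ZMod 2) (emb u (u + t0) '' f ∪ nucleus u t0) =
      S.map (emb u (u + t0)) ⊔ NN u t0 := by
  rw [Submodule.span_union, span_nucleus, hf, Submodule.span_image,
    span_sdiff_zero, Submodule.span_eq]


/-- The underlying submodule of a ray. -/
lemma flat_span {n t : ℕ} {f : Set (V n)} (hf : IsFlat n t f) :
    Module.finrank (ZMod 2) (Submodule.span (ZMod 2) f) = t ∧
      f = (Submodule.span (ZMod 2) f : Set (V n)) \ {0} := by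
  obtain ⟨S, hS, rfl⟩ := hf
  have : Submodule.span (ZMod 2) ((S : Set (V n)) \ {0}) = S := by
    rw [span_sdiff_zero, Submodule.span_eq]
  rw [this]
  exact ⟨hS, rfl⟩

/-- Key modular intersection property. -/
lemma sup_inf_sup {u t0 : ℕ} (S T : Submodule (ZMod 2) (V u)) :
    (S.map (emb u (u + t0)) ⊔ NN u t0) ⊓ (T.map (emb u (u + t0)) ⊔ NN u t0)
      = (S ⊓ T).map (emb u (u + t0)) ⊔ NN u t0 := by
  refine le_antisymm ?_ (le_inf (sup_le_sup_right (Submodule.map_mono inf_le_left) _)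
    (sup_le_sup_right (Submodule.map_mono inf_le_right) _))
  intro x hx
  rw [Submodule.mem_inf, Submodule.mem_sup, Submodule.mem_sup] at hx
  obtain ⟨⟨y, hy, n1, hn1, rfl⟩, z, hz, n2, hn2, hzx⟩ := hx
  obtain ⟨a, ha, rfl⟩ := hy
  obtain ⟨b, hb, rfl⟩ := hz
  have h' : emb u (u + t0) a + n1 = n2 + emb u (u + t0) b := by rw [← hzx]; abel
  have hab : emb u (u + t0) (a - b) ∈ NN u t0 := by
    rw [map_sub, sub_eq_sub_iff_add_eq_add.mpr h']
    exact sub_mem hn2 hn1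
  have hba : a = b := sub_eq_zero.mp (emb_mem_NN hab)
  exact Submodule.mem_sup.mpr ⟨emb u (u + t0) a, ⟨a, ⟨ha, hba ▸ hb⟩, rfl⟩, n1, hn1, rfl⟩

/-- distinct flats of a spread span trivially intersecting subspaces -/
lemma spread_inf {n t : ℕ} {ψ : Set (Set (V n))} (hψ : IsSpread n t ψ)
    {f g : Set (V n)} (hf : f ∈ ψ) (hg : g ∈ ψ) (hne : f ≠ g) :
    Submodule.span (ZMod 2) f ⊓ Submodule.span (ZMod 2) g = ⊥ := by
  rw [Submodule.eq_bot_iff]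
  rintro x ⟨hxf, hxg⟩
  by_contra hx0
  have hF := (flat_span (hψ.1 f hf)).2
  have hG := (flat_span (hψ.1 g hg)).2
  have hxF : x ∈ f := by rw [hF]; exact ⟨hxf, hx0⟩
  have hxG : x ∈ g := by rw [hG]; exact ⟨hxg, hx0⟩
  exact Set.disjoint_left.mp (hψ.2.1 hf hg hne) hxF hxG


/-- The ray associated to a flat. -/
def rayO (u t0 : ℕ) (f : Set (V u)) : Set (V (u + t0)) :=
  (Submodule.span (ZMod 2)
      (emb u (u + t0) '' f ∪ nucleus u t0) : Set (V (u + t0))) \ {0}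

lemma starOf_eq (u t0 : ℕ) (ψ : Set (Set (V u))) :
    starOf u t0 ψ = rayO u t0 '' ψ := rfl

lemma rayO_eq {u t0 : ℕ} (S : Submodule (ZMod 2) (V u)) {f : Set (V u)}
    (hf : f = (S : Set (V u)) \ {0}) :
    rayO u t0 f =
      ((S.map (emb u (u + t0)) ⊔ NN u t0 : Submodule (ZMod 2) (V (u + t0))) :
        Set (V (u + t0))) \ {0} := by
  unfold rayO
  rw [raySpan S hf]

lemma N_sub_ray {u t0 h : ℕ} {f : Set (V u)} (hf : IsFlat u h f) :
    ((NN u t0 : Set (V (u + t0))) \ {0}) ⊆ rayO u t0 f := by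
  rw [rayO_eq _ (flat_span hf).2]
  exact Set.diff_subset_diff_left (SetLike.coe_subset_coe.mpr le_sup_right)

lemma ray_inter {u t0 n : ℕ} {ψ : Set (Set (V u))} (hψ : IsSpread u n ψ)
    {f g : Set (V u)} (hf : f ∈ ψ) (hg : g ∈ ψ) (hne : f ≠ g) :
    rayO u t0 f ∩ rayO u t0 g = (NN u t0 : Set (V (u + t0))) \ {0} := by
  rw [rayO_eq _ (flat_span (hψ.1 f hf)).2, rayO_eq _ (flat_span (hψ.1 g hg)).2]
  have key : ((Submodule.span (ZMod 2) f).map (emb u (u + t0)) ⊔ NN u t0) ⊓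
      ((Submodule.span (ZMod 2) g).map (emb u (u + t0)) ⊔ NN u t0) = NN u t0 := by
    rw [sup_inf_sup, spread_inf hψ hf hg hne, Submodule.map_bot, bot_sup_eq]
  ext x
  simp only [Set.mem_inter_iff, Set.mem_diff, SetLike.mem_coe, Set.mem_singleton_iff]
  constructor
  · rintro ⟨⟨ha, h0⟩, hb, -⟩
    refine ⟨?_, h0⟩
    rw [← key]
    exact Submodule.mem_inf.mpr ⟨ha, hb⟩
  · rintro ⟨hn, h0⟩
    rw [← key] at hn
    obtain ⟨ha, hb⟩ := Submodule.mem_inf.mp hn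
    exact ⟨⟨ha, h0⟩, hb, h0⟩

lemma flat_eq_of_degenerate {u h : ℕ} {f : Set (V u)}
    (hdeg : (∀ v : V u, v = 0) ∨ h = u) (hf : IsFlat u h f) :
    f = {v : V u | v ≠ 0} := by
  obtain ⟨S, hS, rfl⟩ := hf
  rcases hdeg with hall | rfl
  · ext v
    simp [hall v]
  · have hStop : S = ⊤ :=
      Submodule.eq_top_of_finrank_eq (by rw [hS, Module.finrank_fin_fun])
    subst hStop
    ext v
    simp [Set.mem_diff]

lemma span_ne_zero_top {u : ℕ} :
    Submodule.span (ZMod 2) {v : V u | v ≠ 0} = ⊤ := by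
  rw [eq_top_iff]
  intro v _
  by_cases hv : v = 0
  · simp [hv]
  · exact Submodule.subset_span hv

lemma spread_subsingleton_deg {u h : ℕ} {ψ : Set (Set (V u))}
    (hψ : IsSpread u h ψ) (hs : ψ.Subsingleton) :
    (∀ v : V u, v = 0) ∨ h = u := by
  by_cases hψe : ψ = ∅
  · left
    intro v
    by_contra hv
    have : v ∈ ⋃₀ ψ := hψ.2.2.symm ▸ hv
    simp [hψe] at this
  · right
    obtain ⟨f, hf⟩ := Set.nonempty_iff_ne_empty.mpr hψe
    have hψf : ψ = {f} := hs.eq_singleton_of_mem hf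
    have hfv : f = {v : V u | v ≠ 0} := by
      rw [← hψ.2.2, hψf, Set.sUnion_singleton]
    have := (flat_span (hψ.1 f hf)).1
    rw [hfv, span_ne_zero_top] at this
    rw [← this, finrank_top, Module.finrank_fin_fun]

lemma deg_spread_subsingleton {u h : ℕ} {ψ : Set (Set (V u))}
    (hψ : IsSpread u h ψ) (hdeg : (∀ v : V u, v = 0) ∨ h = u) :
    ψ.Subsingleton := by
  intro f hf g hg
  rw [flat_eq_of_degenerate hdeg (hψ.1 f hf), flat_eq_of_degenerate hdeg (hψ.1 g hg)]


/-- Extension of a linear map on `V u` to `V (u + t0)`, acting as the identity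
on the nucleus part. -/
def extL (u t0 : ℕ) (D : V u →ₗ[ZMod 2] V u) :
    V (u + t0) →ₗ[ZMod 2] V (u + t0) :=
  emb u (u + t0) ∘ₗ D ∘ₗ prj u t0 + (LinearMap.id - emb u (u + t0) ∘ₗ prj u t0)

lemma extL_apply (u t0 : ℕ) (D : V u →ₗ[ZMod 2] V u) (v : V (u + t0)) :
    extL u t0 D v = emb u (u + t0) (D (prj u t0 v)) +
      (v - emb u (u + t0) (prj u t0 v)) := by
  simp [extL]

lemma extL_emb (u t0 : ℕ) (D : V u →ₗ[ZMod 2] V u) (x : V u) :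
    extL u t0 D (emb u (u + t0) x) = emb u (u + t0) (D x) := by
  rw [extL_apply, prj_emb]
  abel

lemma extL_mem_NN (u t0 : ℕ) (D : V u →ₗ[ZMod 2] V u) {v : V (u + t0)}
    (hv : v ∈ NN u t0) : extL u t0 D v = v := by
  rw [extL_apply, prj_of_mem hv, map_zero, map_zero]
  abel

lemma prj_extL (u t0 : ℕ) (D : V u →ₗ[ZMod 2] V u) (v : V (u + t0)) :
    prj u t0 (extL u t0 D v) = D (prj u t0 v) := by
  rw [extL_apply, map_add, map_sub, prj_emb, prj_emb, sub_self, add_zero]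

lemma extL_inv (u t0 : ℕ) (D : V u ≃ₗ[ZMod 2] V u) (v : V (u + t0)) :
    extL u t0 D.symm.toLinearMap (extL u t0 D.toLinearMap v) = v := by
  rw [extL_apply u t0 D.symm.toLinearMap, prj_extL]
  show emb u (u + t0) (D.symm (D (prj u t0 v))) + _ = v
  rw [D.symm_apply_apply, extL_apply]
  abel

/-- Extension of a linear automorphism of `V u` to `V (u + t0)`. -/
def extE (u t0 : ℕ) (D : V u ≃ₗ[ZMod 2] V u) :
    V (u + t0) ≃ₗ[ZMod 2] V (u + t0) :=
  LinearEquiv.ofLinear (extL u t0 D.toLinearMap) (extL u t0 D.symm.toLinearMap)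
    (LinearMap.ext fun v => by
      have := extL_inv u t0 D.symm v
      simpa using this)
    (LinearMap.ext fun v => by simpa using extL_inv u t0 D v)

lemma extE_apply (u t0 : ℕ) (D : V u ≃ₗ[ZMod 2] V u) (v : V (u + t0)) :
    extE u t0 D v = extL u t0 D.toLinearMap v := rfl

lemma map_extL_NN (u t0 : ℕ) (D : V u →ₗ[ZMod 2] V u) :
    (NN u t0).map (extL u t0 D) = NN u t0 := by
  apply le_antisymm
  · rintro _ ⟨n, hn, rfl⟩
    rw [extL_mem_NN u t0 D hn]
    exact hn
  · intro n hn
    exact ⟨n, hn, extL_mem_NN u t0 D hn⟩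

lemma map_extL_ray (u t0 : ℕ) (D : V u →ₗ[ZMod 2] V u)
    (S : Submodule (ZMod 2) (V u)) :
    (S.map (emb u (u + t0)) ⊔ NN u t0).map (extL u t0 D)
      = (S.map D).map (emb u (u + t0)) ⊔ NN u t0 := by
  rw [Submodule.map_sup, map_extL_NN]
  congr 1
  rw [← Submodule.map_comp, ← Submodule.map_comp]
  congr 1
  exact LinearMap.ext fun x => extL_emb u t0 D x

/-- Image of a flat under an equivalence. -/
lemma image_flat {u : ℕ} (D : V u ≃ₗ[ZMod 2] V u) (S : Submodule (ZMod 2) (V u))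
    {f : Set (V u)} (hf : f = (S : Set (V u)) \ {0}) :
    ⇑D '' f = ((S.map (D : V u →ₗ[ZMod 2] V u) : Submodule (ZMod 2) (V u)) :
      Set (V u)) \ {0} := by
  rw [hf, Set.image_diff D.injective, Set.image_singleton, map_zero,
    Submodule.map_coe, LinearEquiv.coe_coe]

lemma image_ray_of_map {u t0 : ℕ} (C : V (u + t0) ≃ₗ[ZMod 2] V (u + t0))
    (M M' : Submodule (ZMod 2) (V (u + t0)))
    (hM : M.map (C : V (u + t0) →ₗ[ZMod 2] V (u + t0)) = M') :
    ⇑C '' ((M : Set (V (u + t0))) \ {0}) = (M' : Set (V (u + t0))) \ {0} := by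
  rw [Set.image_diff C.injective, Set.image_singleton, map_zero, ← hM,
    Submodule.map_coe, LinearEquiv.coe_coe]

lemma backward_dir {u t0 h : ℕ} {ψ1 ψ2 : Set (Set (V u))} (h1 : IsSpread u h ψ1)
    (D : V u ≃ₗ[ZMod 2] V u) (hD : (fun f => ⇑D '' f) '' ψ1 = ψ2) :
    (fun r => ⇑(extE u t0 D) '' r) '' starOf u t0 ψ1 = starOf u t0 ψ2 := by
  rw [starOf_eq, starOf_eq, ← hD, Set.image_image, Set.image_image]
  apply Set.image_congr
  intro f hf
  have hfS := (flat_span (h1.1 f hf)).2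
  set S := Submodule.span (ZMod 2) f with hS
  have hray1 := rayO_eq (u := u) (t0 := t0) S hfS
  have hray2 := rayO_eq (u := u) (t0 := t0)
    (S.map (D : V u →ₗ[ZMod 2] V u)) (image_flat D S hfS)
  rw [hray1, hray2]
  refine image_ray_of_map (extE u t0 D) _ _ ?_
  have : ((extE u t0 D : V (u + t0) ≃ₗ[ZMod 2] V (u + t0)) :
      V (u + t0) →ₗ[ZMod 2] V (u + t0)) = extL u t0 D.toLinearMap := rfl
  rw [this, map_extL_ray]


/-- Restriction of a linear map on `V (u + t0)` to `V u`. -/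
def desc (u t0 : ℕ) (C : V (u + t0) →ₗ[ZMod 2] V (u + t0)) :
    V u →ₗ[ZMod 2] V u :=
  prj u t0 ∘ₗ C ∘ₗ emb u (u + t0)

lemma desc_apply (u t0 : ℕ) (C : V (u + t0) →ₗ[ZMod 2] V (u + t0)) (x : V u) :
    desc u t0 C x = prj u t0 (C (emb u (u + t0) x)) := rfl

lemma desc_inv (u t0 : ℕ) (C : V (u + t0) ≃ₗ[ZMod 2] V (u + t0))
    (hC' : ∀ n ∈ NN u t0, C.symm n ∈ NN u t0) (x : V u) :
    desc u t0 C.symm.toLinearMap (desc u t0 C.toLinearMap x) = x := by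
  rw [desc_apply, desc_apply]
  show prj u t0 (C.symm (emb u (u + t0)
    (prj u t0 (C (emb u (u + t0) x))))) = x
  have hn := sub_emb_prj_mem u t0 (C (emb u (u + t0) x))
  have key : emb u (u + t0) (prj u t0 (C (emb u (u + t0) x)))
      = C (emb u (u + t0) x) - (C (emb u (u + t0) x)
          - emb u (u + t0) (prj u t0 (C (emb u (u + t0) x)))) := by abel
  rw [key, map_sub, C.symm_apply_apply, map_sub, prj_emb,
    prj_of_mem (hC' _ hn), sub_zero]

/-- The core computation of the forward direction. -/
lemma core {u t0 h : ℕ} {ψ1 ψ2 : Set (Set (V u))}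
    (h1 : IsSpread u h ψ1) (h2 : IsSpread u h ψ2)
    (C : V (u + t0) ≃ₗ[ZMod 2] V (u + t0))
    (D : V u ≃ₗ[ZMod 2] V u)
    (hDdef : ∀ x : V u, D x = prj u t0 (C (emb u (u + t0) x)))
    {f g : Set (V u)} (hf : f ∈ ψ1) (hg : g ∈ ψ2)
    (hfg : ⇑C '' rayO u t0 f = rayO u t0 g) :
    ⇑D '' f = g := by
  obtain ⟨hFfin, hFeq⟩ := flat_span (h1.1 f hf)
  obtain ⟨hGfin, hGeq⟩ := flat_span (h2.1 g hg)
  set S := Submodule.span (ZMod 2) f with hS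
  set T := Submodule.span (ZMod 2) g with hT
  set M1 := S.map (emb u (u + t0)) ⊔ NN u t0 with hM1
  set M2 := T.map (emb u (u + t0)) ⊔ NN u t0 with hM2
  rw [rayO_eq S hFeq, rayO_eq T hGeq] at hfg
  have hMset : ⇑C '' (M1 : Set (V (u + t0))) = (M2 : Set (V (u + t0))) := by
    have e1 : (M1 : Set (V (u + t0))) = ((M1 : Set (V (u + t0))) \ {0}) ∪ {0} := by
      rw [Set.diff_union_of_subset (Set.singleton_subset_iff.mpr M1.zero_mem)]
    have e2 : (M2 : Set (V (u + t0))) = ((M2 : Set (V (u + t0))) \ {0}) ∪ {0} := by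
      rw [Set.diff_union_of_subset (Set.singleton_subset_iff.mpr M2.zero_mem)]
    rw [e1, Set.image_union, hfg, Set.image_singleton, map_zero, ← e2]
  have hM : M1.map (C : V (u + t0) →ₗ[ZMod 2] V (u + t0)) = M2 :=
    SetLike.coe_injective (by rw [Submodule.map_coe, LinearEquiv.coe_coe, hMset])
  have hle : S.map (D : V u →ₗ[ZMod 2] V u) ≤ T := by
    rintro _ ⟨x, hx, rfl⟩
    have hmem : C (emb u (u + t0) x) ∈ M2 := by
      rw [← hM]
      exact ⟨emb u (u + t0) x,
        Submodule.mem_sup_left (Submodule.mem_map_of_mem hx), rfl⟩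
    rw [hM2, Submodule.mem_sup] at hmem
    obtain ⟨w, ⟨s, hs, rfl⟩, n, hn, hEq⟩ := hmem
    have hDx : D x = s := by
      rw [hDdef, ← hEq, map_add, prj_emb, prj_of_mem hn, add_zero]
    show D x ∈ T
    rw [hDx]
    exact hs
  have hfin : Module.finrank (ZMod 2) (S.map (D : V u →ₗ[ZMod 2] V u))
      = Module.finrank (ZMod 2) T := by
    rw [LinearEquiv.finrank_map_eq, hFfin, hGfin]
  have hST : S.map (D : V u →ₗ[ZMod 2] V u) = T :=
    Submodule.eq_of_le_of_finrank_eq hle hfin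
  rw [image_flat D S hFeq, hST, ← hGeq]

lemma forward_dir {u t0 h : ℕ} {ψ1 ψ2 : Set (Set (V u))}
    (h1 : IsSpread u h ψ1) (h2 : IsSpread u h ψ2)
    (hnt1 : ψ1.Nontrivial) (hnt2 : ψ2.Nontrivial)
    (C : V (u + t0) ≃ₗ[ZMod 2] V (u + t0))
    (hC : (fun r => ⇑C '' r) '' starOf u t0 ψ1 = starOf u t0 ψ2) :
    ∃ D : V u ≃ₗ[ZMod 2] V u, (fun f => ⇑D '' f) '' ψ1 = ψ2 := by
  obtain ⟨fa, hfa, fb, hfb, hab⟩ := hnt1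
  obtain ⟨ga, hga, gb, hgb, hgab⟩ := hnt2
  rw [starOf_eq, starOf_eq] at hC
  -- C maps the punctured nucleus into itself
  have hCmem : ∀ x ∈ ((NN u t0 : Set (V (u + t0))) \ {0}),
      C x ∈ ((NN u t0 : Set (V (u + t0))) \ {0}) := by
    intro x hx
    have hall : ∀ g ∈ ψ2, C x ∈ rayO u t0 g := by
      intro g hg
      have hmem : rayO u t0 g ∈ (fun r => ⇑C '' r) '' (rayO u t0 '' ψ1) := by
        rw [hC]
        exact Set.mem_image_of_mem _ hg
      obtain ⟨R, hR, hRg⟩ := hmem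
      obtain ⟨f, hf, rfl⟩ := hR
      rw [← hRg]
      exact Set.mem_image_of_mem _ (N_sub_ray (h1.1 f hf) hx)
    rw [← ray_inter (t0 := t0) h2 hga hgb hgab]
    exact ⟨hall ga hga, hall gb hgb⟩
  -- and likewise for the inverse
  have hCmem' : ∀ y ∈ ((NN u t0 : Set (V (u + t0))) \ {0}),
      C.symm y ∈ ((NN u t0 : Set (V (u + t0))) \ {0}) := by
    intro y hy
    have hall : ∀ f ∈ ψ1, C.symm y ∈ rayO u t0 f := by
      intro f hf
      have hmem : ⇑C '' rayO u t0 f ∈ rayO u t0 '' ψ2 := by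
        rw [← hC]
        exact Set.mem_image_of_mem _ (Set.mem_image_of_mem _ hf)
      obtain ⟨g, hg, hEq⟩ := hmem
      have : y ∈ ⇑C '' rayO u t0 f := by
        rw [← hEq]
        exact N_sub_ray (h2.1 g hg) hy
      obtain ⟨w, hw, hwy⟩ := this
      rwa [← hwy, C.symm_apply_apply]
    rw [← ray_inter (t0 := t0) h1 hfa hfb hab]
    exact ⟨hall fa hfa, hall fb hfb⟩
  have hCN : ∀ n ∈ NN u t0, C n ∈ NN u t0 := by
    intro n hn
    by_cases hn0 : n = 0
    · rw [hn0, map_zero]; exact (NN u t0).zero_mem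
    · exact (hCmem n ⟨hn, hn0⟩).1
  have hCN' : ∀ n ∈ NN u t0, C.symm n ∈ NN u t0 := by
    intro n hn
    by_cases hn0 : n = 0
    · rw [hn0, map_zero]; exact (NN u t0).zero_mem
    · exact (hCmem' n ⟨hn, hn0⟩).1
  -- define D
  set D : V u ≃ₗ[ZMod 2] V u := LinearEquiv.ofLinear
    (desc u t0 C.toLinearMap) (desc u t0 C.symm.toLinearMap)
    (LinearMap.ext fun x => by
      have := desc_inv u t0 C.symm (by simpa using hCN) x
      simpa using this)
    (LinearMap.ext fun x => desc_inv u t0 C hCN' x) with hD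
  have hDdef : ∀ x : V u, D x = prj u t0 (C (emb u (u + t0) x)) := fun x => rfl
  refine ⟨D, ?_⟩
  ext g
  constructor
  · rintro ⟨f, hf, rfl⟩
    have hmem : ⇑C '' rayO u t0 f ∈ rayO u t0 '' ψ2 := by
      rw [← hC]
      exact Set.mem_image_of_mem _ (Set.mem_image_of_mem _ hf)
    obtain ⟨g', hg', hEq⟩ := hmem
    show ⇑D '' f ∈ ψ2
    rw [core h1 h2 C D hDdef hf hg' hEq.symm]
    exact hg'
  · intro hg
    have hmem : rayO u t0 g ∈ (fun r => ⇑C '' r) '' (rayO u t0 '' ψ1) := by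
      rw [hC]
      exact Set.mem_image_of_mem _ hg
    obtain ⟨R, hR, hRg⟩ := hmem
    obtain ⟨f, hf, rfl⟩ := hR
    exact ⟨f, hf, core h1 h2 C D hDdef hf hg hRg⟩

end StarIso

open StarIso in
/-- Lemma 2: the stars `Ω_j = ψ_j × π` are isomorphic (equal after applying
some element of `GL(u+t0, 2)`) if and only if the spreads `ψ_j` are
isomorphic (equal after applying some element of `GL(u, 2)`). -/
theorem star_iso_iff_spread_iso (u t0 h : ℕ)
    (ψ1 ψ2 : Set (Set (V u)))
    (h1 : IsSpread u h ψ1) (h2 : IsSpread u h ψ2) :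
    (∃ C : V (u + t0) ≃ₗ[ZMod 2] V (u + t0),
        (fun r => ⇑C '' r) '' starOf u t0 ψ1 = starOf u t0 ψ2) ↔
    (∃ D : V u ≃ₗ[ZMod 2] V u, (fun f => ⇑D '' f) '' ψ1 = ψ2) := by
  constructor
  · rintro ⟨C, hC⟩
    by_cases hsub : ψ1.Subsingleton
    · -- degenerate case: `ψ1` has at most one flat
      by_cases hψe : ψ1 = ∅
      · -- then `ψ2` is empty as well
        have hψ2 : ψ2 = ∅ := by
          rw [hψe, starOf_eq, Set.image_empty, Set.image_empty] at hC
          rw [starOf_eq] at hC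
          exact Set.image_eq_empty.mp hC.symm
        exact ⟨LinearEquiv.refl _ _, by rw [hψe, hψ2, Set.image_empty]⟩
      · -- then `ψ1 = {f}` where `f` is the set of all nonzero vectors,
        -- and similarly for `ψ2`
        obtain ⟨f, hf⟩ := Set.nonempty_iff_ne_empty.mpr hψe
        have hdeg := spread_subsingleton_deg h1 hsub
        have hψ1f : ψ1 = {f} := hsub.eq_singleton_of_mem hf
        have hψ2ne : ψ2.Nonempty := by
          have : (starOf u t0 ψ2).Nonempty := by
            rw [← hC]
            exact ((Set.nonempty_iff_ne_empty.mpr hψe).image _).image _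
          rw [starOf_eq] at this
          exact this.of_image
        obtain ⟨g, hg⟩ := hψ2ne
        have hgf : g = f := by
          rw [flat_eq_of_degenerate hdeg (h2.1 g hg),
            ← flat_eq_of_degenerate hdeg (h1.1 f hf)]
        have hψ2f : ψ2 = {f} := by
          ext g'
          constructor
          · intro hg'
            have : g' = f := by
              rw [flat_eq_of_degenerate hdeg (h2.1 g' hg'),
                ← flat_eq_of_degenerate hdeg (h1.1 f hf)]
            exact this ▸ rfl
          · intro hg'
            rw [Set.mem_singleton_iff] at hg'
            rw [hg', ← hgf]
            exact hg
        refine ⟨LinearEquiv.refl _ _, ?_⟩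
        rw [hψ1f, hψ2f, Set.image_singleton]
        congr 1
        exact Set.image_id f
    · -- main case: `ψ1` (hence `ψ2`) contains two distinct flats
      have hnt1 : ψ1.Nontrivial := Set.not_subsingleton_iff.mp hsub
      have hnt2 : ψ2.Nontrivial := by
        rw [← Set.not_subsingleton_iff]
        intro hs2
        exact hsub (deg_spread_subsingleton h1 (spread_subsingleton_deg h2 hs2))
      exact forward_dir h1 h2 hnt1 hnt2 C hC
  · rintro ⟨D, hD⟩
    exact ⟨extE u t0 D, backward_dir h1 D hD⟩
end

section
/- Every balanced (h-1)-spread ψ of PG(u-1,2), where h divides u and r = u/h, contains r flats f_{i_1},...,f_{i_r} whose corresponding subspaces are linearly independent, i.e., their span is all of GF(2)^u (equivalently, GF(2)^u is the direct sum of the r corresponding h-dimensional subspaces). -/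
open Module

noncomputable instance {n : ℕ} : Fintype (V n) := Fintype.ofFinite _

lemma sub_ncard {n : ℕ} (S : Submodule (ZMod 2) (V n)) :
    ((S : Set (V n)) \ {0}).ncard = 2 ^ (finrank (ZMod 2) S) - 1 := by
  classical
  have h1 : (S : Set (V n)).ncard = 2 ^ (finrank (ZMod 2) S) := by
    have := card_eq_pow_finrank (K := ZMod 2) (V := S)
    simp [ZMod.card] at this
    rw [Set.ncard_eq_toFinset_card', Set.toFinset_card]
    simpa using this
  rw [Set.ncard_diff_singleton_of_mem S.zero_mem, h1]

lemma flat_ncard_s10 {n t : ℕ} {f : Set (V n)} (hf : IsFlat n t f) :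
    f.ncard = 2 ^ t - 1 := by
  obtain ⟨S, hS, rfl⟩ := hf
  rw [sub_ncard, hS]

lemma nonzero_ncard (n : ℕ) : ({v : V n | v ≠ 0}).ncard = 2 ^ n - 1 := by
  have := sub_ncard (n := n) ⊤
  simp only [finrank_top] at this
  have h2 : ((⊤ : Submodule (ZMod 2) (V n)) : Set (V n)) \ {0} = {v : V n | v ≠ 0} := by
    ext v; simp
  rw [h2] at this
  rw [this, Module.finrank_fin_fun]

/-- Key counting lemma: if `finrank W + h ≤ u` then some flat of the spread avoids `W`. -/
lemma exists_flat_avoid {u h : ℕ} (hh : 1 ≤ h) {ψ : Set (Set (V u))}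
    (hψ : IsSpread u h ψ) {W : Submodule (ZMod 2) (V u)}
    (hW : finrank (ZMod 2) W + h ≤ u) :
    ∃ f ∈ ψ, f ∩ (W : Set (V u)) = ∅ := by
  classical
  obtain ⟨hflat, hdisj, hcover⟩ := hψ
  by_contra hcon
  push_neg at hcon
  -- every flat meets W in a nonzero point
  have hmeet : ∀ f ∈ ψ, ∃ x, x ∈ f ∩ ((W : Set (V u)) \ {0}) := by
    intro f hf
    obtain ⟨x, hx⟩ := hcon f hf
    refine ⟨x, hx.1, hx.2, ?_⟩
    have : x ∈ ⋃₀ ψ := ⟨f, hf, hx.1⟩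
    rw [hcover] at this
    simpa using this
  -- choice function, injective into W \ {0}
  choose g hg using hmeet
  have hψfin : ψ.Finite := Set.toFinite _
  -- upper bound on Nat.card ψ
  have hinj : Set.InjOn (fun p : {f // f ∈ ψ} => g p.1 p.2) Set.univ := by
    rintro ⟨f1, h1⟩ - ⟨f2, h2⟩ - heq
    simp only at heq
    by_contra hne
    have hne' : f1 ≠ f2 := fun hc => hne (by simp [hc])
    have := hdisj h1 h2 hne'
    have h1' : g f1 h1 ∈ f1 := (hg f1 h1).1
    have h2' : g f2 h2 ∈ f2 := (hg f2 h2).1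
    rw [heq] at h1'
    exact (this.le_bot ⟨h1', h2'⟩ : _)
  have hub : ψ.ncard ≤ 2 ^ (finrank (ZMod 2) W) - 1 := by
    have : Nat.card {f // f ∈ ψ} ≤ Nat.card ((W : Set (V u)) \ {0} : Set (V u)) := by
      apply Nat.card_le_card_of_injective (fun p : {f // f ∈ ψ} => ⟨g p.1 p.2, (hg p.1 p.2).2⟩)
      intro a b hab
      have := hinj (Set.mem_univ a) (Set.mem_univ b) (by simpa using congrArg Subtype.val hab)
      exact this
    rw [← sub_ncard W, ← Nat.card_coe_set_eq ψ, ← Nat.card_coe_set_eq ((W : Set (V u)) \ {0})]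
    exact this
  -- lower bound: the flats cover 2^u - 1 points, each of size 2^h - 1
  have hlb : 2 ^ u - 1 ≤ ψ.ncard * (2 ^ h - 1) := by
    have hsub : ({v : V u | v ≠ 0}).toFinset ⊆
        hψfin.toFinset.biUnion (fun f => f.toFinset) := by
      intro v hv
      rw [Set.mem_toFinset] at hv
      rw [← hcover] at hv
      obtain ⟨f, hf, hvf⟩ := hv
      simp only [Finset.mem_biUnion, Set.Finite.mem_toFinset, Set.mem_toFinset]
      exact ⟨f, hf, hvf⟩
    calc 2 ^ u - 1 = ({v : V u | v ≠ 0}).toFinset.card := by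
          rw [← Set.ncard_eq_toFinset_card', nonzero_ncard]
      _ ≤ (hψfin.toFinset.biUnion (fun f => f.toFinset)).card := Finset.card_le_card hsub
      _ ≤ ∑ f ∈ hψfin.toFinset, f.toFinset.card := Finset.card_biUnion_le
      _ = ∑ f ∈ hψfin.toFinset, (2 ^ h - 1) := by
          apply Finset.sum_congr rfl
          intro f hf
          rw [← Set.ncard_eq_toFinset_card', flat_ncard_s10 (hflat f (hψfin.mem_toFinset.1 hf))]
      _ = hψfin.toFinset.card * (2 ^ h - 1) := by rw [Finset.sum_const, smul_eq_mul]
      _ = ψ.ncard * (2 ^ h - 1) := by rw [Set.ncard_eq_toFinset_card]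
  -- arithmetic contradiction
  set k := finrank (ZMod 2) W
  set N := ψ.ncard
  have hc : 2 ^ h = (2 ^ h - 1) + 1 := by
    have : 1 ≤ 2 ^ h := Nat.one_le_two_pow
    omega
  set c := 2 ^ h - 1 with hcdef
  have hc1 : 1 ≤ c := by
    have : 2 ≤ 2 ^ h := by calc 2 = 2 ^ 1 := (pow_one 2).symm
                                _ ≤ 2 ^ h := Nat.pow_le_pow_right (by norm_num) hh
    omega
  have hab : 2 ^ k * (c + 1) ≤ 2 ^ u := by
    rw [← hc, ← pow_add]
    exact Nat.pow_le_pow_right (by norm_num) hW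
  have hNa : N + 1 ≤ 2 ^ k := by
    have : 1 ≤ 2 ^ k := Nat.one_le_two_pow
    omega
  have h2u : 1 ≤ 2 ^ u := Nat.one_le_two_pow
  have hlb' : 2 ^ u ≤ N * c + 1 := by omega
  have : (N + 1) * (c + 1) ≤ 2 ^ k * (c + 1) := Nat.mul_le_mul_right _ hNa
  nlinarith [hc1, this, hab, hlb']

lemma span_flat {u h : ℕ} (hh : 1 ≤ h) {f : Set (V u)} {S : Submodule (ZMod 2) (V u)}
    (hS : finrank (ZMod 2) S = h) (hf : f = (S : Set (V u)) \ {0}) :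
    Submodule.span (ZMod 2) f = S := by
  apply le_antisymm
  · rw [Submodule.span_le, hf]
    exact Set.diff_subset
  · intro x hx
    by_cases hx0 : x = 0
    · simp [hx0]
    · exact Submodule.subset_span (by rw [hf]; exact ⟨hx, hx0⟩)

lemma key_induction (u h : ℕ) (hh : 1 ≤ h) (ψ : Set (Set (V u))) (hψ : IsSpread u h ψ) :
    ∀ k, k * h ≤ u → ∃ fs : Fin k → Set (V u),
      (∀ i, fs i ∈ ψ) ∧ Function.Injective fs ∧
        finrank (ZMod 2) (Submodule.span (ZMod 2) (⋃ i, fs i)) = k * h := by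
  intro k
  induction k with
  | zero =>
    intro _
    refine ⟨Fin.elim0, fun i => i.elim0, fun i => i.elim0, ?_⟩
    simp
  | succ k ih =>
    intro hku
    have hk : k * h ≤ u := le_trans (by nlinarith) hku
    obtain ⟨fs, hmem, hinj, hrank⟩ := ih hk
    set W := Submodule.span (ZMod 2) (⋃ i, fs i) with hWdef
    have hW : finrank (ZMod 2) W + h ≤ u := by rw [hrank]; linarith [hku, Nat.succ_mul k h]
    obtain ⟨f, hfψ, hfW⟩ := exists_flat_avoid hh hψ hW
    obtain ⟨S, hS, hfeq⟩ := hψ.1 f hfψ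
    have hspanf : Submodule.span (ZMod 2) f = S := span_flat hh hS hfeq
    have hinf : S ⊓ W = ⊥ := by
      rw [eq_bot_iff]
      intro x ⟨hxS, hxW⟩
      by_cases hx0 : x = 0
      · simp [hx0]
      · exfalso
        have : x ∈ f ∩ (W : Set (V u)) := ⟨by rw [hfeq]; exact ⟨hxS, hx0⟩, hxW⟩
        rw [hfW] at this
        exact this
    have hfne : f.Nonempty := by
      apply Set.nonempty_of_ncard_ne_zero
      rw [flat_ncard_s10 ⟨S, hS, hfeq⟩]
      have : 2 ≤ 2 ^ h := by calc 2 = 2 ^ 1 := (pow_one 2).symm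
                                  _ ≤ 2 ^ h := Nat.pow_le_pow_right (by norm_num) hh
      omega
    have hfnot : ∀ i, f ≠ fs i := by
      intro i heq
      obtain ⟨x, hx⟩ := hfne
      have hxW : x ∈ (W : Set (V u)) := by
        apply Submodule.subset_span
        rw [heq] at hx
        exact Set.mem_iUnion.2 ⟨i, hx⟩
      have : x ∈ f ∩ (W : Set (V u)) := ⟨hx, hxW⟩
      rw [hfW] at this
      exact this
    refine ⟨Fin.cons f fs, ?_, ?_, ?_⟩
    · intro i
      refine Fin.cases ?_ ?_ i
      · simpa using hfψ
      · intro j; simpa using hmem j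
    · rw [Fin.cons_injective_iff]
      refine ⟨?_, hinj⟩
      rintro ⟨i, hi⟩
      exact hfnot i hi.symm
    · have hun : (⋃ i, (Fin.cons f fs : Fin (k+1) → Set (V u)) i) = f ∪ ⋃ i, fs i := by
        ext x
        simp only [Set.mem_iUnion, Set.mem_union]
        constructor
        · rintro ⟨i, hi⟩
          refine Fin.cases (fun h0 => Or.inl (by simpa using h0))
            (fun i' hi' => Or.inr ⟨i', by simpa using hi'⟩) i hi
        · rintro (hx | ⟨i, hi⟩)
          · exact ⟨0, by simpa using hx⟩
          · exact ⟨i.succ, by simpa using hi⟩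
      rw [hun, Submodule.span_union, hspanf, ← hWdef]
      have := Submodule.finrank_sup_add_finrank_inf_eq S W
      rw [hinf] at this
      simp only [finrank_bot, add_zero] at this
      rw [this, hS, hrank, Nat.succ_mul]
      ring

/-- Lemma 3: every balanced `(h-1)`-spread of `PG(u-1,2)` (with `h ∣ u`,
`r = u/h`) contains `r` distinct flats whose corresponding subspaces are
linearly independent, i.e. together they span all of `GF(2)^u`. -/
theorem spread_contains_LIF (u h : ℕ) (hh : 1 ≤ h) (hdvd : h ∣ u)
    (ψ : Set (Set (V u))) (hψ : IsSpread u h ψ) :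
    ∃ fs : Fin (u / h) → Set (V u),
      (∀ i, fs i ∈ ψ) ∧ Function.Injective fs ∧
        Submodule.span (ZMod 2) (⋃ i, fs i) = ⊤ := by
  have hrh : u / h * h = u := Nat.div_mul_cancel hdvd
  obtain ⟨fs, hmem, hinj, hrank⟩ := key_induction u h hh ψ hψ (u / h) (le_of_eq hrh)
  refine ⟨fs, hmem, hinj, ?_⟩
  apply Submodule.eq_top_of_finrank_eq
  rw [hrank, hrh, Module.finrank_fin_fun]
end
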